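/- Let 𝒞 be a bigraded Hom-finite k-linear triangulated category satisfying the skew Calabi-Yau hypothesis with Serre functor F = Σ^d T^ℓ Φ and scalars s, t. Let X be an object with an isomorphism φ : X → Φ(X). Then the bigraded algebra E(X) = ⊕_{i,j} Hom(X, Σ^i T^j X), with multiplication given by graded composition, is a Frobenius algebra: the bilinear form (f, g) = Tr_X(φ * f * g) for |g| = (i,j), |f| = (d-i, ℓ-j) (and zero when degrees do not sum to (d,ℓ)) is associative and nondegenerate. -/

import Mathlib

open CategoryTheory

/-- `sh S T i j X` denotes `Σ^i T^j X`. -/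
def sh {C : Type*} [Category C] (S T : ℤ → C ⥤ C) (i j : ℤ) (X : C) : C :=
  (S i).obj ((T j).obj X)

/-- Graded (bigraded) composition `a * b = Σ^i T^j(a) ∘ b` of homogeneous elements of
the endomorphism algebra `E(X₀)`, where `a` has bidegree `(p,q)` and `b` has
bidegree `(i,j)`. -/
def gmul {C : Type*} [Category C] (S T : ℤ → C ⥤ C)
    (hcomb : ∀ (i j i' j' : ℤ) (X : C),
      sh S T i j (sh S T i' j' X) = sh S T (i + i') (j + j') X)
    {X₀ : C} {p q i j : ℤ}
    (a : X₀ ⟶ sh S T p q X₀) (b : X₀ ⟶ sh S T i j X₀) :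
    X₀ ⟶ sh S T (i + p) (j + q) X₀ :=
  b ≫ (S i).map ((T j).map a) ≫ eqToHom (hcomb i j p q X₀)

/-- The Frobenius bilinear form `(f, g) = Tr_X(φ * f * g)` on `E(X₀)`, for `g` of
bidegree `(i,j)` and `f` of bidegree `(p,q)` with `(p,q) + (i,j) = (d,ℓ)` (the
latter being witnessed by the object identification `e`). -/
def pairB {k : Type*} [Field k] {C : Type*} [Category C]
    [Preadditive C] [CategoryTheory.Linear k C]
    (S T : ℤ → C ⥤ C) (Φ : C ⥤ C) (d ℓ : ℤ)
    (Tr : ∀ X : C, (X ⟶ sh S T d ℓ (Φ.obj X)) →ₗ[k] k)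
    {X₀ : C} (φ : X₀ ⟶ Φ.obj X₀) {p q i j : ℤ}
    (f : X₀ ⟶ sh S T p q X₀) (g : X₀ ⟶ sh S T i j X₀)
    (e : sh S T i j (sh S T p q X₀) = sh S T d ℓ X₀) : k :=
  Tr X₀ (g ≫ (S i).map ((T j).map f) ≫ eqToHom e ≫ (S d).map ((T ℓ).map φ))

section FrobAux

variable {C : Type*} [Category C]

/-- A functor with a strict two-sided inverse is surjective on hom-sets
between objects in its image. -/
lemma strict_inv_surj (F G : C ⥤ C) (h1 : F ⋙ G = 𝟭 C) (h2 : G ⋙ F = 𝟭 C)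
    {A B : C} (v : F.obj A ⟶ F.obj B) : ∃ u : A ⟶ B, F.map u = v := by
  refine ⟨eqToHom (Functor.congr_obj h1 A).symm ≫ G.map v ≫
    eqToHom (Functor.congr_obj h1 B), ?_⟩
  have h := Functor.congr_hom h2 v
  simp only [Functor.map_comp, eqToHom_map]
  rw [show F.map (G.map v) = (G ⋙ F).map v from rfl, h]
  simp

/-- Compatibility of the combined shift with iterated shifts on morphisms. -/
lemma shmap_comb (S T : ℤ → C ⥤ C)
    (hSadd : ∀ i j : ℤ, S (i + j) = S j ⋙ S i)
    (hTadd : ∀ i j : ℤ, T (i + j) = T j ⋙ T i)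
    (hST : ∀ i j : ℤ, S i ⋙ T j = T j ⋙ S i)
    (hcomb : ∀ (i j i' j' : ℤ) (X : C),
      sh S T i j (sh S T i' j' X) = sh S T (i + i') (j + j') X)
    (i j p q : ℤ) {A B : C} (u : A ⟶ B) :
    (S (i + p)).map ((T (j + q)).map u) =
      eqToHom (hcomb i j p q A).symm ≫
        (S i).map ((T j).map ((S p).map ((T q).map u))) ≫ eqToHom (hcomb i j p q B) := by
  delta sh at *
  have e1 : (T (j + q)).map u = eqToHom (Functor.congr_obj (hTadd j q) A) ≫
      (T j).map ((T q).map u) ≫ eqToHom (Functor.congr_obj (hTadd j q) B).symm :=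
    Functor.congr_hom (hTadd j q) u
  rw [e1]
  have e2 := Functor.congr_hom (hSadd i p)
      ((eqToHom (Functor.congr_obj (hTadd j q) A) ≫
      (T j).map ((T q).map u) ≫ eqToHom (Functor.congr_obj (hTadd j q) B).symm))
  rw [e2]
  have e3 := Functor.congr_hom (hST p j) ((T q).map u)
  simp only [Functor.comp_map] at e3
  simp only [Functor.comp_map, Functor.map_comp, eqToHom_map, Category.assoc]
  rw [e3]
  simp only [Functor.map_comp, eqToHom_map, Functor.comp_map, Category.assoc,
    eqToHom_trans, eqToHom_trans_assoc]

end FrobAux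

/-- Theorem 2.7, Frobenius property: in a bigraded Hom-finite
`k`-linear triangulated category satisfying the skew Calabi-Yau hypothesis with
Serre functor `F = Σ^d T^ℓ Φ` and scalars `s, t`, if `X₀` is an object with an
isomorphism `φ : X₀ → Φ(X₀)`, then the bilinear form
`(f,g) = Tr_{X₀}(φ * f * g)` on `E(X₀) = ⊕ Hom(X₀, Σ^i T^j X₀)` is associative
and nondegenerate; hence `E(X₀)` is a bigraded Frobenius algebra. -/
theorem ext_algebra_frobenius {k : Type*} [Field k] {C : Type*} [Category C]
    [Preadditive C] [CategoryTheory.Linear k C]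
    [hfin : ∀ X Y : C, FiniteDimensional k (X ⟶ Y)]
    (S T : ℤ → C ⥤ C) (Φ : C ⥤ C) [Φ.IsEquivalence]
    (hS0 : S 0 = 𝟭 C) (hSadd : ∀ i j : ℤ, S (i + j) = S j ⋙ S i)
    (hT0 : T 0 = 𝟭 C) (hTadd : ∀ i j : ℤ, T (i + j) = T j ⋙ T i)
    (hST : ∀ i j : ℤ, S i ⋙ T j = T j ⋙ S i)
    (hSΦ : ∀ i : ℤ, S i ⋙ Φ = Φ ⋙ S i)
    (hTΦ : ∀ j : ℤ, T j ⋙ Φ = Φ ⋙ T j)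
    (hcomb : ∀ (i j i' j' : ℤ) (X : C),
      sh S T i j (sh S T i' j' X) = sh S T (i + i') (j + j') X)
    (hΦsh : ∀ (i j : ℤ) (X : C), Φ.obj (sh S T i j X) = sh S T i j (Φ.obj X))
    (d ℓ : ℤ) (s t : k) (hs : s ≠ 0) (ht : t ≠ 0)
    (Tr : ∀ X : C, (X ⟶ sh S T d ℓ (Φ.obj X)) →ₗ[k] k)
    (htrace0 : ∀ (X Y : C) (f : X ⟶ Y) (g : Y ⟶ sh S T d ℓ (Φ.obj X)),
      Tr X (f ≫ g) = Tr Y (g ≫ (S d).map ((T ℓ).map (Φ.map f))))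
    (htr : ∀ (i j : ℤ) (X : C)
      (f : sh S T i j X ⟶ sh S T d ℓ (Φ.obj (sh S T i j X)))
      (h : X ⟶ sh S T d ℓ (Φ.obj X)),
      (S i).map ((T j).map h) = (s ^ i * t ^ j) • (f ≫ eqToHom
        (by rw [hΦsh, hcomb, hcomb, add_comm d i, add_comm ℓ j] :
          sh S T d ℓ (Φ.obj (sh S T i j X)) = sh S T i j (sh S T d ℓ (Φ.obj X)))) →
      Tr X h = (-1 : k) ^ i * Tr (sh S T i j X) f)
    (X₀ : C) (φ : X₀ ⟶ Φ.obj X₀) [IsIso φ]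
    -- nondegeneracy of the Serre duality trace pairing
    (hnd₁ : ∀ (W : C) (g : W ⟶ sh S T d ℓ (Φ.obj X₀)),
      (∀ f : X₀ ⟶ W, Tr X₀ (f ≫ g) = 0) → g = 0)
    (hnd₂ : ∀ (W : C) (f : X₀ ⟶ W),
      (∀ g : W ⟶ sh S T d ℓ (Φ.obj X₀), Tr X₀ (f ≫ g) = 0) → f = 0) :
    -- associativity of the pairing: `(a * b, c) = (a, b * c)`
    (∀ (i₁ j₁ i₂ j₂ i₃ j₃ : ℤ) (hsum : i₁ + i₂ + i₃ = d) (jsum : j₁ + j₂ + j₃ = ℓ)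
      (a : X₀ ⟶ sh S T i₁ j₁ X₀) (b : X₀ ⟶ sh S T i₂ j₂ X₀)
      (c : X₀ ⟶ sh S T i₃ j₃ X₀),
      pairB S T Φ d ℓ Tr φ (gmul S T hcomb a b) c
          (by rw [hcomb, show i₃ + (i₂ + i₁) = d from by omega,
              show j₃ + (j₂ + j₁) = ℓ from by omega]) =
        pairB S T Φ d ℓ Tr φ a (gmul S T hcomb b c)
          (by rw [hcomb, show i₃ + i₂ + i₁ = d from by omega,
              show j₃ + j₂ + j₁ = ℓ from by omega])) ∧
    -- nondegeneracy of the pairing, on both sides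
    (∀ (i j : ℤ) (g : X₀ ⟶ sh S T i j X₀),
      (∀ f : X₀ ⟶ sh S T (d - i) (ℓ - j) X₀,
        pairB S T Φ d ℓ Tr φ f g
          (by rw [hcomb, show i + (d - i) = d from by ring,
              show j + (ℓ - j) = ℓ from by ring]) = 0) → g = 0) ∧
    (∀ (p q : ℤ) (f : X₀ ⟶ sh S T p q X₀),
      (∀ g : X₀ ⟶ sh S T (d - p) (ℓ - q) X₀,
        pairB S T Φ d ℓ Tr φ f g
          (by rw [hcomb, show d - p + p = d from by ring,
              show ℓ - q + q = ℓ from by ring]) = 0) → f = 0) := by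
  classical
  -- strict inverses for the combined shift functors
  have hS : ∀ i : ℤ, S i ⋙ S (-i) = 𝟭 C := fun i => by
    rw [← hSadd, show -i + i = 0 by ring, hS0]
  have hS' : ∀ i : ℤ, S (-i) ⋙ S i = 𝟭 C := fun i => by
    rw [← hSadd, show i + -i = 0 by ring, hS0]
  have hT' : ∀ j : ℤ, T j ⋙ T (-j) = 𝟭 C := fun j => by
    rw [← hTadd, show -j + j = 0 by ring, hT0]
  have hT'' : ∀ j : ℤ, T (-j) ⋙ T j = 𝟭 C := fun j => by
    rw [← hTadd, show j + -j = 0 by ring, hT0]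
  have h1 : ∀ i j : ℤ, (T j ⋙ S i) ⋙ (S (-i) ⋙ T (-j)) = 𝟭 C := by
    intro i j
    have h : (T j ⋙ S i) ⋙ (S (-i) ⋙ T (-j)) = T j ⋙ ((S i ⋙ S (-i)) ⋙ T (-j)) := rfl
    rw [h, hS i, Functor.id_comp, hT' j]
  have h2 : ∀ i j : ℤ, (S (-i) ⋙ T (-j)) ⋙ (T j ⋙ S i) = 𝟭 C := by
    intro i j
    have h : (S (-i) ⋙ T (-j)) ⋙ (T j ⋙ S i) = S (-i) ⋙ ((T (-j) ⋙ T j) ⋙ S i) := rfl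
    rw [h, hT'' j, Functor.id_comp, hS' i]
  have hsurj : ∀ (i j : ℤ) {A B : C} (v : sh S T i j A ⟶ sh S T i j B),
      ∃ u : A ⟶ B, (S i).map ((T j).map u) = v := by
    intro i j A B v
    exact strict_inv_surj (T j ⋙ S i) (S (-i) ⋙ T (-j)) (h1 i j) (h2 i j) v
  refine ⟨?_, ?_, ?_⟩
  · -- associativity
    intro i₁ j₁ i₂ j₂ i₃ j₃ hsum jsum a b c
    unfold pairB gmul
    congr 1
    rw [shmap_comb S T hSadd hTadd hST hcomb i₃ j₃ i₂ j₂ a]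
    delta sh at *
    simp only [Functor.map_comp, eqToHom_map, Category.assoc, eqToHom_trans,
      eqToHom_trans_assoc, eqToHom_refl, Category.id_comp, Category.comp_id]
  · -- nondegeneracy in the second argument
    intro i j g H
    apply hnd₂ (sh S T i j X₀) g
    intro h
    have e : sh S T i j (sh S T (d - i) (ℓ - j) X₀) = sh S T d ℓ X₀ := by
      rw [hcomb, show i + (d - i) = d by ring, show j + (ℓ - j) = ℓ by ring]
    delta sh at *
    obtain ⟨f, hf⟩ := hsurj i j
      (h ≫ inv ((S d).map ((T ℓ).map φ)) ≫ eqToHom e.symm)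
    have hH := H f
    unfold pairB at hH
    delta sh at hH
    rw [hf] at hH
    simpa using hH
  · -- nondegeneracy in the first argument
    intro p q f H
    have e : sh S T (d - p) (ℓ - q) (sh S T p q X₀) = sh S T d ℓ X₀ := by
      rw [hcomb, show d - p + p = d by ring, show ℓ - q + q = ℓ by ring]
    have hg' : (S (d - p)).map ((T (ℓ - q)).map f) ≫ eqToHom e ≫
        (S d).map ((T ℓ).map φ) = 0 := by
      apply hnd₁
      intro u
      have hH := H u
      unfold pairB at hH
      delta sh at *
      simpa using hH
    have hF : (S (d - p)).map ((T (ℓ - q)).map f) = 0 := by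
      have h : ((S (d - p)).map ((T (ℓ - q)).map f) ≫ eqToHom e ≫
          (S d).map ((T ℓ).map φ)) ≫ inv ((S d).map ((T ℓ).map φ)) ≫
          eqToHom e.symm = (S (d - p)).map ((T (ℓ - q)).map f) := by
        delta sh at *
        simp
      rw [← h, hg']
      simp
      rfl
    apply hnd₂ (sh S T p q X₀) f
    intro v
    have hzero : (S (d - p)).map ((T (ℓ - q)).map (f ≫ v)) =
        (s ^ (d - p) * t ^ (ℓ - q)) • ((0 : sh S T (d - p) (ℓ - q) X₀ ⟶
          sh S T d ℓ (Φ.obj (sh S T (d - p) (ℓ - q) X₀))) ≫ eqToHom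
        (by rw [hΦsh, hcomb, hcomb, add_comm d (d - p), add_comm ℓ (ℓ - q)] :
          sh S T d ℓ (Φ.obj (sh S T (d - p) (ℓ - q) X₀)) =
            sh S T (d - p) (ℓ - q) (sh S T d ℓ (Φ.obj X₀)))) := by
      simp only [Functor.map_comp, hF, Limits.zero_comp, smul_zero]
      rfl
    have hres := htr (d - p) (ℓ - q) X₀ 0 (f ≫ v) hzero
    rw [hres, map_zero, mul_zero]
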